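/- Fix a finite index set I and a total order < on I. For a sequence S of symbols with σ_i + 1 symbols of kind i for each i ∈ I, define the failure set partition Q_S of I as the finest set partition such that whenever i < j and the last symbol of kind i is immediately followed by the first symbol of kind j in S, i and j lie in the same block. Then for a set partition P of I, the number of sequences S in which, for each block p = {p_1 < ... < p_k} of P, the last symbol of kind p_m is immediately followed by the first symbol of kind p_{m+1} for m = 1, ..., k-1, equals the number of sequences S whose failure set partition Q_S is a coarsening of P obtained by merging blocks of P whose maximum elements and minimum elements interleave consistently; in particular, the signed sum ∑_{P} (-1)^{|P|+|I|} #{such S} over all set partitions P counts exactly the sequences S with Q_S the discrete partition (all blocks singletons). -/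

import Mathlib

open Finset

/-- In the word `w`, the last symbol of kind `i` is immediately followed by the first
symbol of kind `j`. -/
def LastFirstAdj {n T : ℕ} (w : Fin T → Fin n) (i j : Fin n) : Prop :=
  ∃ s t : Fin T, w s = i ∧ w t = j ∧ (t : ℕ) = (s : ℕ) + 1 ∧
    (∀ u, w u = i → u ≤ s) ∧ (∀ u, w u = j → t ≤ u)


namespace SSCDF

variable {n T : ℕ} {w : Fin T → Fin n}

lemma adj_right_unique {i j j' : Fin n} (h : LastFirstAdj w i j) (h' : LastFirstAdj w i j') :
    j = j' := by
  obtain ⟨s, t, hsi, htj, hts, hmax, -⟩ := h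
  obtain ⟨s', t', hsi', htj', hts', hmax', -⟩ := h'
  have hss : s = s' := le_antisymm (hmax' s hsi) (hmax s' hsi')
  have htt : t = t' := Fin.ext (by rw [hts, hts', hss])
  rw [← htj, ← htj', htt]

lemma adj_left_unique {i i' j : Fin n} (h : LastFirstAdj w i j) (h' : LastFirstAdj w i' j) :
    i = i' := by
  obtain ⟨s, t, hsi, htj, hts, -, hmin⟩ := h
  obtain ⟨s', t', hsi', htj', hts', -, hmin'⟩ := h'
  have htt : t = t' := le_antisymm (hmin t' htj') (hmin' t htj)
  have hval : (t : ℕ) = (t' : ℕ) := congrArg Fin.val htt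
  have hss : s = s' := Fin.ext (by omega)
  rw [← hsi, ← hsi', hss]

/-- The compatibility condition from the statement. -/
def Compat (w : Fin T → Fin n) (P : Finpartition (Finset.univ : Finset (Fin n))) : Prop :=
  ∀ p ∈ P.parts, ∀ x ∈ p, ∀ y ∈ p, x < y →
    (∀ z ∈ p, ¬(x < z ∧ z < y)) → LastFirstAdj w x y

lemma min_gt {P : Finpartition (Finset.univ : Finset (Fin n))} (hc : Compat w P)
    {p : Finset (Fin n)} (hp : p ∈ P.parts) {x y : Fin n} (hx : x ∈ p) (hy : y ∈ p)
    (hxy : x < y) : ∃ m ∈ p, x < m ∧ m ≤ y ∧ LastFirstAdj w x m := by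
  have hne : (p.filter (fun z => x < z)).Nonempty := ⟨y, mem_filter.2 ⟨hy, hxy⟩⟩
  set m := (p.filter (fun z => x < z)).min' hne with hm
  obtain ⟨hmp, hxm⟩ := mem_filter.1 ((p.filter (fun z => x < z)).min'_mem hne)
  refine ⟨m, hmp, hxm, min'_le _ y (mem_filter.2 ⟨hy, hxy⟩), ?_⟩
  refine hc p hp x hx m hmp hxm fun z hz hb => ?_
  exact absurd (min'_le _ z (mem_filter.2 ⟨hz, hb.1⟩)) (not_le.2 hb.2)

lemma predLt {P : Finpartition (Finset.univ : Finset (Fin n))} (hc : Compat w P)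
    {q : Finset (Fin n)} (hq : q ∈ P.parts) {x y : Fin n} (hx : x ∈ q) (hy : y ∈ q)
    (hxy : x < y) : ∃ m ∈ q, m < y ∧ x ≤ m ∧ LastFirstAdj w m y := by
  classical
  have hne : (q.filter (fun z => z < y)).Nonempty := ⟨x, mem_filter.2 ⟨hx, hxy⟩⟩
  obtain ⟨hmq, hmy⟩ := mem_filter.1 ((q.filter (fun z => z < y)).max'_mem hne)
  refine ⟨(q.filter (fun z => z < y)).max' hne, hmq, hmy,
    le_max' (q.filter (fun z => z < y)) x (mem_filter.2 ⟨hx, hxy⟩), ?_⟩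
  refine hc q hq _ hmq y hy hmy fun z hz hb => ?_
  exact absurd (le_max' (q.filter (fun z => z < y)) z (mem_filter.2 ⟨hz, hb.2⟩)) (not_le.2 hb.1)

lemma succ_le {P : Finpartition (Finset.univ : Finset (Fin n))} (hc : Compat w P)
    {i j : Fin n} (hadj : LastFirstAdj w i j) {p : Finset (Fin n)} (hp : p ∈ P.parts)
    (hi : i ∈ p) {y : Fin n} (hy : y ∈ p) (hxy : i < y) : j ∈ p ∧ j ≤ y := by
  obtain ⟨m, hmp, him, hmy, hadj'⟩ := min_gt hc hp hi hy hxy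
  obtain rfl : j = m := adj_right_unique hadj hadj'
  exact ⟨hmp, hmy⟩

lemma pred_ge {P : Finpartition (Finset.univ : Finset (Fin n))} (hc : Compat w P)
    {i j : Fin n} (hadj : LastFirstAdj w i j) {q : Finset (Fin n)} (hq : q ∈ P.parts)
    (hj : j ∈ q) {x : Fin n} (hx : x ∈ q) (hxy : x < j) : i ∈ q ∧ x ≤ i := by
  obtain ⟨m, hmq, hmj, hxm, hadj'⟩ := predLt hc hq hx hj hxy
  obtain rfl : i = m := adj_left_unique hadj hadj'
  exact ⟨hmq, hxm⟩

end SSCDF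

namespace SSCDF

variable {n T : ℕ} {w : Fin T → Fin n}

open scoped Classical

lemma part_eq_of_subset {P : Finpartition (Finset.univ : Finset (Fin n))}
    {a p : Finset (Fin n)} (ha : a ∈ P.parts) (hp : p ∈ P.parts) (hsub : a ⊆ p)
    (hne : a.Nonempty) : a = p := by
  obtain ⟨x, hx⟩ := hne
  exact P.eq_of_mem_parts ha hp hx (hsub hx)

lemma sub_not_mem_erase {P : Finpartition (Finset.univ : Finset (Fin n))}
    {a p : Finset (Fin n)} (hp : p ∈ P.parts) (hne : a.Nonempty) (hsub : a ⊆ p)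
    (hna : a ≠ p) : a ∉ P.parts.erase p := fun h =>
  hna (part_eq_of_subset (mem_of_mem_erase h) hp hsub hne)

lemma union_not_mem_parts {P : Finpartition (Finset.univ : Finset (Fin n))}
    {p q : Finset (Fin n)} (hp : p ∈ P.parts) (hq : q ∈ P.parts) (hpq : p ≠ q) :
    p ∪ q ∉ P.parts := by
  intro h
  obtain ⟨x, hx⟩ := P.nonempty_of_mem_parts hp
  have h1 : p ∪ q = p := P.eq_of_mem_parts h hp (mem_union_left _ hx) hx
  obtain ⟨y, hy⟩ := P.nonempty_of_mem_parts hq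
  exact hpq (P.eq_of_mem_parts hp hq (h1 ▸ mem_union_right _ hy) hy)

/-- Merge two distinct parts of a finpartition of `univ`. -/
noncomputable def mergeP (P : Finpartition (Finset.univ : Finset (Fin n)))
    (p q : Finset (Fin n)) (hp : p ∈ P.parts) (hq : q ∈ P.parts) (hpq : p ≠ q) :
    Finpartition (Finset.univ : Finset (Fin n)) where
  parts := insert (p ∪ q) ((P.parts.erase p).erase q)
  supIndep := by
    rw [Finset.supIndep_iff_pairwiseDisjoint, coe_insert]
    refine Set.PairwiseDisjoint.insert (P.disjoint.subset ?_) ?_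
    · intro r hr
      exact mem_coe.2 (mem_of_mem_erase (mem_of_mem_erase (mem_coe.1 hr)))
    · intro r hr _
      have hrq : r ≠ q := ne_of_mem_erase (mem_coe.1 hr)
      have hrp : r ≠ p := ne_of_mem_erase (mem_of_mem_erase (mem_coe.1 hr))
      have hrP : r ∈ P.parts := mem_of_mem_erase (mem_of_mem_erase (mem_coe.1 hr))
      simp only [id]
      rw [Finset.disjoint_union_left]
      exact ⟨P.disjoint (mem_coe.2 hp) (mem_coe.2 hrP) (Ne.symm hrp),
        P.disjoint (mem_coe.2 hq) (mem_coe.2 hrP) (Ne.symm hrq)⟩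
  sup_parts := by
    apply le_antisymm
    · exact Finset.sup_le fun r _ => le_top
    · refine le_trans (le_of_eq P.sup_parts.symm) (Finset.sup_le fun r hr => ?_)
      rcases eq_or_ne r p with rfl | hrp
      · exact le_trans subset_union_left (Finset.le_sup (f := id) (mem_insert_self _ _))
      rcases eq_or_ne r q with rfl | hrq
      · exact le_trans subset_union_right (Finset.le_sup (f := id) (mem_insert_self _ _))
      · exact Finset.le_sup (f := id) (mem_insert_of_mem (mem_erase.2 ⟨hrq, mem_erase.2 ⟨hrp, hr⟩⟩))
  bot_notMem := by
    intro h
    rcases mem_insert.1 h with h0 | h0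
    · obtain ⟨x, hx⟩ := P.nonempty_of_mem_parts hp
      rw [Finset.bot_eq_empty] at h0
      exact notMem_empty x (h0 ▸ mem_union_left _ hx)
    · exact P.bot_notMem (mem_of_mem_erase (mem_of_mem_erase h0))

@[simp] lemma mergeP_parts (P : Finpartition (Finset.univ : Finset (Fin n)))
    (p q : Finset (Fin n)) (hp : p ∈ P.parts) (hq : q ∈ P.parts) (hpq : p ≠ q) :
    (mergeP P p q hp hq hpq).parts = insert (p ∪ q) ((P.parts.erase p).erase q) := rfl

lemma mergeP_card {P : Finpartition (Finset.univ : Finset (Fin n))}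
    {p q : Finset (Fin n)} (hp : p ∈ P.parts) (hq : q ∈ P.parts) (hpq : p ≠ q) :
    (mergeP P p q hp hq hpq).parts.card + 1 = P.parts.card := by
  have h1 : p ∪ q ∉ (P.parts.erase p).erase q := fun h =>
    union_not_mem_parts hp hq hpq (mem_of_mem_erase (mem_of_mem_erase h))
  have h2 : 2 ≤ P.parts.card := Finset.one_lt_card.2 ⟨p, hp, q, hq, hpq⟩
  rw [mergeP_parts, card_insert_of_notMem h1,
    card_erase_of_mem (mem_erase.2 ⟨Ne.symm hpq, hq⟩), card_erase_of_mem hp]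
  omega

/-- Split a part of a finpartition of `univ` into two nonempty pieces. -/
noncomputable def splitP (P : Finpartition (Finset.univ : Finset (Fin n)))
    (p : Finset (Fin n)) (hp : p ∈ P.parts) (a b : Finset (Fin n))
    (hab : Disjoint a b) (hu : a ∪ b = p) (ha : a.Nonempty) (hb : b.Nonempty) :
    Finpartition (Finset.univ : Finset (Fin n)) where
  parts := insert a (insert b (P.parts.erase p))
  supIndep := by
    have hap : a ⊆ p := hu ▸ subset_union_left
    have hbp : b ⊆ p := hu ▸ subset_union_right
    have herase : ∀ r, r ∈ P.parts.erase p → Disjoint p r := by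
      intro r hr
      exact P.disjoint (mem_coe.2 hp) (mem_coe.2 (mem_of_mem_erase hr))
        (Ne.symm (ne_of_mem_erase hr))
    rw [Finset.supIndep_iff_pairwiseDisjoint, coe_insert, coe_insert]
    refine Set.PairwiseDisjoint.insert (Set.PairwiseDisjoint.insert
      (P.disjoint.subset ?_) ?_) ?_
    · intro r hr
      exact mem_coe.2 (mem_of_mem_erase (mem_coe.1 hr))
    · intro r hr _
      exact Disjoint.mono_left hbp (herase r (mem_coe.1 hr))
    · intro r hr hne
      rcases hr with rfl | hr
      · exact hab
      · exact Disjoint.mono_left hap (herase r (mem_coe.1 hr))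
  sup_parts := by
    apply le_antisymm
    · exact Finset.sup_le fun r _ => le_top
    · refine le_trans (le_of_eq P.sup_parts.symm) (Finset.sup_le fun r hr => ?_)
      rcases eq_or_ne r p with rfl | hrp
      · have h1 : a ≤ (insert a (insert b (P.parts.erase r))).sup id :=
          Finset.le_sup (f := id) (mem_insert_self _ _)
        have h2 : b ≤ (insert a (insert b (P.parts.erase r))).sup id :=
          Finset.le_sup (f := id) (mem_insert_of_mem (mem_insert_self _ _))
        calc (id r : Finset (Fin n)) = a ∪ b := hu.symm
          _ ≤ _ := union_subset h1 h2
      · exact Finset.le_sup (f := id) (mem_insert_of_mem (mem_insert_of_mem (mem_erase.2 ⟨hrp, hr⟩)))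
  bot_notMem := by
    intro h
    rcases mem_insert.1 h with h0 | h0
    · rw [Finset.bot_eq_empty] at h0; exact ha.ne_empty h0.symm
    rcases mem_insert.1 h0 with h1 | h1
    · rw [Finset.bot_eq_empty] at h1; exact hb.ne_empty h1.symm
    · exact P.bot_notMem (mem_of_mem_erase h1)

@[simp] lemma splitP_parts (P : Finpartition (Finset.univ : Finset (Fin n)))
    (p : Finset (Fin n)) (hp : p ∈ P.parts) (a b : Finset (Fin n))
    (hab : Disjoint a b) (hu : a ∪ b = p) (ha : a.Nonempty) (hb : b.Nonempty) :
    (splitP P p hp a b hab hu ha hb).parts = insert a (insert b (P.parts.erase p)) := rfl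

lemma splitP_card {P : Finpartition (Finset.univ : Finset (Fin n))}
    {p : Finset (Fin n)} (hp : p ∈ P.parts) {a b : Finset (Fin n)}
    (hab : Disjoint a b) (hu : a ∪ b = p) (ha : a.Nonempty) (hb : b.Nonempty) :
    (splitP P p hp a b hab hu ha hb).parts.card = P.parts.card + 1 := by
  have hap : a ⊆ p := hu ▸ subset_union_left
  have hbp : b ⊆ p := hu ▸ subset_union_right
  have hanep : a ≠ p := by
    rintro rfl
    obtain ⟨y, hy⟩ := hb
    exact (disjoint_left.1 hab) (hu ▸ mem_union_right _ hy) hy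
  have hbnep : b ≠ p := by
    rintro rfl
    obtain ⟨x, hx⟩ := ha
    exact (disjoint_left.1 hab) hx (hu ▸ mem_union_left _ hx)
  have hane : a ∉ P.parts.erase p := sub_not_mem_erase hp ha hap hanep
  have hbne : b ∉ P.parts.erase p := sub_not_mem_erase hp hb hbp hbnep
  have hab' : a ≠ b := by
    rintro rfl
    obtain ⟨x, hx⟩ := ha
    exact (disjoint_left.1 hab) hx hx
  have h1 : 1 ≤ P.parts.card := card_pos.2 ⟨p, hp⟩
  rw [splitP_parts, card_insert_of_notMem (by
      simp only [mem_insert, not_or]; exact ⟨hab', hane⟩),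
    card_insert_of_notMem hbne, card_erase_of_mem hp]
  omega

end SSCDF

namespace SSCDF

open scoped Classical

variable {n T : ℕ} {w : Fin T → Fin n}

lemma compat_splitP {P : Finpartition (Finset.univ : Finset (Fin n))} (hc : Compat w P)
    {p : Finset (Fin n)} (hp : p ∈ P.parts) {a b : Finset (Fin n)}
    (hab : Disjoint a b) (hu : a ∪ b = p) (ha : a.Nonempty) (hb : b.Nonempty)
    (horder : ∀ x ∈ a, ∀ y ∈ b, x < y) :
    Compat w (splitP P p hp a b hab hu ha hb) := by
  intro r hr x hx y hy hxy hbet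
  rw [splitP_parts] at hr
  rcases mem_insert.1 hr with rfl | hr
  · -- r = a
    refine hc p hp x (hu ▸ mem_union_left _ hx) y (hu ▸ mem_union_left _ hy) hxy ?_
    intro z hz hb2
    rw [← hu] at hz
    rcases mem_union.1 hz with hz | hz
    · exact hbet z hz hb2
    · exact absurd hb2.2 (not_lt.2 (le_of_lt (horder y hy z hz)))
  rcases mem_insert.1 hr with rfl | hr
  · -- r = b
    refine hc p hp x (hu ▸ mem_union_right _ hx) y (hu ▸ mem_union_right _ hy) hxy ?_
    intro z hz hb2
    rw [← hu] at hz
    rcases mem_union.1 hz with hz | hz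
    · exact absurd hb2.1 (not_lt.2 (le_of_lt (horder z hz x hx)))
    · exact hbet z hz hb2
  · exact hc r (mem_of_mem_erase hr) x hx y hy hxy hbet

lemma compat_mergeP {P : Finpartition (Finset.univ : Finset (Fin n))} (hc : Compat w P)
    {i₀ j₀ : Fin n} (hlt : i₀ < j₀) (hadj : LastFirstAdj w i₀ j₀)
    {p q : Finset (Fin n)} (hp : p ∈ P.parts) (hq : q ∈ P.parts) (hpq : p ≠ q)
    (hi : i₀ ∈ p) (hj : j₀ ∈ q)
    (hpl : ∀ x ∈ p, x ≤ i₀) (hql : ∀ y ∈ q, j₀ ≤ y) :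
    Compat w (mergeP P p q hp hq hpq) := by
  intro r hr x hx y hy hxy hbet
  rw [mergeP_parts] at hr
  rcases mem_insert.1 hr with rfl | hr
  · rcases mem_union.1 hx with hxp | hxq <;> rcases mem_union.1 hy with hyp | hyq
    · exact hc p hp x hxp y hyp hxy (fun z hz => hbet z (mem_union_left _ hz))
    · -- x ∈ p, y ∈ q
      have hxi : x = i₀ := by
        by_contra hne
        exact hbet i₀ (mem_union_left _ hi)
          ⟨lt_of_le_of_ne (hpl x hxp) hne, lt_of_lt_of_le hlt (hql y hyq)⟩
      have hyj : y = j₀ := by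
        by_contra hne
        exact hbet j₀ (mem_union_right _ hj)
          ⟨lt_of_le_of_lt (hpl x hxp) hlt, lt_of_le_of_ne (hql y hyq) (Ne.symm hne)⟩
      rw [hxi, hyj]; exact hadj
    · exact absurd hxy
        (not_lt.2 (le_trans (hpl y hyp) (le_trans hlt.le (hql x hxq))))
    · exact hc q hq x hxq y hyq hxy (fun z hz => hbet z (mem_union_right _ hz))
  · exact hc r (mem_of_mem_erase (mem_of_mem_erase hr)) x hx y hy hxy hbet

section Toggle

variable {i₀ j₀ : Fin n}

lemma split_disj (hlt : i₀ < j₀) (p : Finset (Fin n)) :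
    Disjoint (p.filter (fun z => z ≤ i₀)) (p.filter (fun z => j₀ ≤ z)) :=
  disjoint_left.2 fun z h1 h2 =>
    absurd hlt (not_lt.2 (le_trans (mem_filter.1 h2).2 (mem_filter.1 h1).2))

lemma split_union {P : Finpartition (Finset.univ : Finset (Fin n))} (hc : Compat w P)
    (hadj : LastFirstAdj w i₀ j₀) (hs : j₀ ∈ P.part i₀) :
    (P.part i₀).filter (fun z => z ≤ i₀) ∪ (P.part i₀).filter (fun z => j₀ ≤ z)
      = P.part i₀ := by
  ext z
  simp only [mem_union, mem_filter]
  constructor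
  · rintro (h | h) <;> exact h.1
  · intro hz
    rcases le_or_gt z i₀ with h | h
    · exact Or.inl ⟨hz, h⟩
    · exact Or.inr ⟨hz, (succ_le hc hadj (P.part_mem.2 (mem_univ i₀))
        (P.mem_part (mem_univ i₀)) hz h).2⟩

lemma part_le_of_not_mem {P : Finpartition (Finset.univ : Finset (Fin n))}
    (hc : Compat w P) (hadj : LastFirstAdj w i₀ j₀) (hs : j₀ ∉ P.part i₀) :
    ∀ z ∈ P.part i₀, z ≤ i₀ := by
  intro z hz
  by_contra h
  push_neg at h
  exact hs (succ_le hc hadj (P.part_mem.2 (mem_univ i₀)) (P.mem_part (mem_univ i₀)) hz h).1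

lemma part_ge_of_not_mem {P : Finpartition (Finset.univ : Finset (Fin n))}
    (hc : Compat w P) (hadj : LastFirstAdj w i₀ j₀) (hs : j₀ ∉ P.part i₀) :
    ∀ z ∈ P.part j₀, j₀ ≤ z := by
  intro z hz
  by_contra h
  push_neg at h
  have hi : i₀ ∈ P.part j₀ :=
    (pred_ge hc hadj (P.part_mem.2 (mem_univ j₀)) (P.mem_part (mem_univ j₀)) hz h).1
  have : P.part i₀ = P.part j₀ := P.part_eq_of_mem (P.part_mem.2 (mem_univ j₀)) hi
  exact hs (this ▸ P.mem_part (mem_univ j₀))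

variable (w) (i₀ j₀ : Fin n)

/-- The sign-reversing involution: toggle the failure edge `(i₀, j₀)`. -/
noncomputable def toggle (hlt : i₀ < j₀) (hadj : LastFirstAdj w i₀ j₀)
    (P : Finpartition (Finset.univ : Finset (Fin n))) :
    Finpartition (Finset.univ : Finset (Fin n)) :=
  if h : Compat w P then
    if hs : j₀ ∈ P.part i₀ then
      splitP P (P.part i₀) (P.part_mem.2 (mem_univ i₀))
        ((P.part i₀).filter (fun z => z ≤ i₀)) ((P.part i₀).filter (fun z => j₀ ≤ z))
        (split_disj hlt _) (split_union h hadj hs)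
        ⟨i₀, mem_filter.2 ⟨P.mem_part (mem_univ i₀), le_refl i₀⟩⟩
        ⟨j₀, mem_filter.2 ⟨hs, le_refl j₀⟩⟩
    else
      mergeP P (P.part i₀) (P.part j₀) (P.part_mem.2 (mem_univ i₀)) (P.part_mem.2 (mem_univ j₀))
        (fun he => hs (he ▸ P.mem_part (mem_univ j₀)))
  else P

variable {w i₀ j₀}
variable (hlt : i₀ < j₀) (hadj : LastFirstAdj w i₀ j₀)

lemma toggle_not_compat {P : Finpartition (Finset.univ : Finset (Fin n))}
    (h : ¬ Compat w P) : toggle w i₀ j₀ hlt hadj P = P := by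
  rw [toggle, dif_neg h]

lemma toggle_parts_split {P : Finpartition (Finset.univ : Finset (Fin n))}
    (h : Compat w P) (hs : j₀ ∈ P.part i₀) :
    (toggle w i₀ j₀ hlt hadj P).parts
      = insert ((P.part i₀).filter (fun z => z ≤ i₀))
          (insert ((P.part i₀).filter (fun z => j₀ ≤ z)) (P.parts.erase (P.part i₀))) := by
  rw [toggle, dif_pos h, dif_pos hs]; rfl

lemma toggle_parts_merge {P : Finpartition (Finset.univ : Finset (Fin n))}
    (h : Compat w P) (hs : j₀ ∉ P.part i₀) :
    (toggle w i₀ j₀ hlt hadj P).parts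
      = insert (P.part i₀ ∪ P.part j₀)
          ((P.parts.erase (P.part i₀)).erase (P.part j₀)) := by
  rw [toggle, dif_pos h, dif_neg hs, mergeP_parts]

lemma compat_toggle {P : Finpartition (Finset.univ : Finset (Fin n))}
    (h : Compat w P) : Compat w (toggle w i₀ j₀ hlt hadj P) := by
  rw [toggle, dif_pos h]
  by_cases hs : j₀ ∈ P.part i₀
  · rw [dif_pos hs]
    refine compat_splitP h _ _ _ _ _ ?_
    intro x hx y hy
    exact lt_of_le_of_lt (mem_filter.1 hx).2 (lt_of_lt_of_le hlt (mem_filter.1 hy).2)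
  · rw [dif_neg hs]
    exact compat_mergeP h hlt hadj _ _ _ (P.mem_part (mem_univ i₀)) (P.mem_part (mem_univ j₀))
      (part_le_of_not_mem h hadj hs) (part_ge_of_not_mem h hadj hs)

lemma card_toggle {P : Finpartition (Finset.univ : Finset (Fin n))}
    (h : Compat w P) :
    (toggle w i₀ j₀ hlt hadj P).parts.card = P.parts.card + 1 ∨
      (toggle w i₀ j₀ hlt hadj P).parts.card + 1 = P.parts.card := by
  by_cases hs : j₀ ∈ P.part i₀
  · left
    rw [toggle, dif_pos h, dif_pos hs]
    exact splitP_card _ _ _ _ _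
  · right
    rw [toggle, dif_pos h, dif_neg hs]
    exact mergeP_card _ _ _

end Toggle

end SSCDF

namespace SSCDF

open scoped Classical

variable {n T : ℕ} {w : Fin T → Fin n} {i₀ j₀ : Fin n}

lemma toggle_toggle (hlt : i₀ < j₀) (hadj : LastFirstAdj w i₀ j₀)
    (P : Finpartition (Finset.univ : Finset (Fin n))) :
    toggle w i₀ j₀ hlt hadj (toggle w i₀ j₀ hlt hadj P) = P := by
  by_cases h : Compat w P
  · by_cases hs : j₀ ∈ P.part i₀
    · -- split, then merge back
      have hp : P.part i₀ ∈ P.parts := P.part_mem.2 (mem_univ i₀)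
      have hia : i₀ ∈ (P.part i₀).filter (fun z => z ≤ i₀) :=
        mem_filter.2 ⟨P.mem_part (mem_univ i₀), le_refl i₀⟩
      have hjb : j₀ ∈ (P.part i₀).filter (fun z => j₀ ≤ z) := mem_filter.2 ⟨hs, le_refl j₀⟩
      have hPparts := toggle_parts_split hlt hadj h hs
      have ha' : (P.part i₀).filter (fun z => z ≤ i₀) ∈ (toggle w i₀ j₀ hlt hadj P).parts := by
        rw [hPparts]; exact mem_insert_self _ _
      have hb' : (P.part i₀).filter (fun z => j₀ ≤ z) ∈ (toggle w i₀ j₀ hlt hadj P).parts := by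
        rw [hPparts]; exact mem_insert_of_mem (mem_insert_self _ _)
      have hpa : (toggle w i₀ j₀ hlt hadj P).part i₀ = (P.part i₀).filter (fun z => z ≤ i₀) :=
        Finpartition.part_eq_of_mem _ ha' hia
      have hpb : (toggle w i₀ j₀ hlt hadj P).part j₀ = (P.part i₀).filter (fun z => j₀ ≤ z) :=
        Finpartition.part_eq_of_mem _ hb' hjb
      have hs' : j₀ ∉ (toggle w i₀ j₀ hlt hadj P).part i₀ := by
        rw [hpa]; intro hj; exact absurd hlt (not_lt.2 (mem_filter.1 hj).2)
      have hab : (P.part i₀).filter (fun z => z ≤ i₀) ≠ (P.part i₀).filter (fun z => j₀ ≤ z) := by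
        intro he
        rw [← he] at hjb
        exact absurd hlt (not_lt.2 (mem_filter.1 hjb).2)
      have hane : (P.part i₀).filter (fun z => z ≤ i₀) ∉ P.parts.erase (P.part i₀) := fun hmem =>
        (mem_erase.1 hmem).1 (part_eq_of_subset (mem_of_mem_erase hmem) hp
          (filter_subset _ _) ⟨i₀, hia⟩)
      have hbne : (P.part i₀).filter (fun z => j₀ ≤ z) ∉ P.parts.erase (P.part i₀) := fun hmem =>
        (mem_erase.1 hmem).1 (part_eq_of_subset (mem_of_mem_erase hmem) hp
          (filter_subset _ _) ⟨j₀, hjb⟩)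
      apply Finpartition.ext
      rw [toggle_parts_merge hlt hadj (compat_toggle hlt hadj h) hs', hpa, hpb, hPparts]
      rw [Finset.erase_insert (by simp only [mem_insert, not_or]; exact ⟨hab, hane⟩),
        Finset.erase_insert hbne, split_union h hadj hs, insert_erase hp]
    · -- merge, then split back
      have hp : P.part i₀ ∈ P.parts := P.part_mem.2 (mem_univ i₀)
      have hq : P.part j₀ ∈ P.parts := P.part_mem.2 (mem_univ j₀)
      have hpq : P.part i₀ ≠ P.part j₀ := fun he => hs (he ▸ P.mem_part (mem_univ j₀))
      have hple := part_le_of_not_mem h hadj hs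
      have hqge := part_ge_of_not_mem h hadj hs
      have hPparts := toggle_parts_merge hlt hadj h hs
      have hupart : (toggle w i₀ j₀ hlt hadj P).part i₀ = P.part i₀ ∪ P.part j₀ := by
        refine Finpartition.part_eq_of_mem _ ?_ (mem_union_left _ (P.mem_part (mem_univ i₀)))
        rw [hPparts]; exact mem_insert_self _ _
      have hs' : j₀ ∈ (toggle w i₀ j₀ hlt hadj P).part i₀ := by
        rw [hupart]; exact mem_union_right _ (P.mem_part (mem_univ j₀))
      have hfa : (P.part i₀ ∪ P.part j₀).filter (fun z => z ≤ i₀) = P.part i₀ := by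
        ext z
        simp only [mem_filter, mem_union]
        constructor
        · rintro ⟨hz | hz, hle⟩
          · exact hz
          · exact absurd (le_trans (hqge z hz) hle) (not_le.2 hlt)
        · intro hz; exact ⟨Or.inl hz, hple z hz⟩
      have hfb : (P.part i₀ ∪ P.part j₀).filter (fun z => j₀ ≤ z) = P.part j₀ := by
        ext z
        simp only [mem_filter, mem_union]
        constructor
        · rintro ⟨hz | hz, hle⟩
          · exact absurd (le_trans hle (hple z hz)) (not_le.2 hlt)
          · exact hz
        · intro hz; exact ⟨Or.inr hz, hqge z hz⟩
      have hune : P.part i₀ ∪ P.part j₀ ∉ (P.parts.erase (P.part i₀)).erase (P.part j₀) :=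
        fun hmem => union_not_mem_parts hp hq hpq (mem_of_mem_erase (mem_of_mem_erase hmem))
      apply Finpartition.ext
      rw [toggle_parts_split hlt hadj (compat_toggle hlt hadj h) hs', hupart, hfa, hfb, hPparts]
      rw [Finset.erase_insert hune, insert_erase (mem_erase.2 ⟨Ne.symm hpq, hq⟩),
        insert_erase hp]
  · rw [toggle_not_compat hlt hadj h, toggle_not_compat hlt hadj h]

lemma toggle_ne (hlt : i₀ < j₀) (hadj : LastFirstAdj w i₀ j₀)
    {P : Finpartition (Finset.univ : Finset (Fin n))} (h : Compat w P) :
    toggle w i₀ j₀ hlt hadj P ≠ P := by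
  intro he
  rcases card_toggle hlt hadj h with hc | hc <;> rw [he] at hc <;> omega

lemma compat_bot : Compat w (⊥ : Finpartition (Finset.univ : Finset (Fin n))) := by
  intro p hp x hx y hy hxy _
  obtain ⟨a, -, rfl⟩ := Finpartition.mem_bot_iff.1 hp
  have hx' := mem_singleton.1 hx
  have hy' := mem_singleton.1 hy
  exact absurd (hx'.trans hy'.symm ▸ hxy) (lt_irrefl y)

lemma eq_bot_of_compat (hD : ∀ i j : Fin n, i < j → ¬ LastFirstAdj w i j)
    {P : Finpartition (Finset.univ : Finset (Fin n))} (hc : Compat w P) : P = ⊥ := by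
  have hsing : ∀ t ∈ P.parts, ∀ x ∈ t, t = {x} := by
    intro t ht x hx
    refine Finset.eq_singleton_iff_unique_mem.2 ⟨hx, ?_⟩
    intro z hz
    by_contra hne
    rcases Ne.lt_or_gt hne with hl | hl
    · obtain ⟨m, -, hzm, -, hadj⟩ := min_gt hc ht hz hx hl
      exact hD z m hzm hadj
    · obtain ⟨m, -, hxm, -, hadj⟩ := min_gt hc ht hx hz hl
      exact hD x m hxm hadj
  apply Finpartition.ext
  ext t
  rw [Finpartition.mem_bot_iff]
  constructor
  · intro ht
    obtain ⟨x, hx⟩ := P.nonempty_of_mem_parts ht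
    exact ⟨x, mem_univ x, (hsing t ht x hx).symm⟩
  · rintro ⟨a, -, rfl⟩
    have h1 := P.part_mem.2 (mem_univ a)
    have h2 := hsing _ h1 a (P.mem_part (mem_univ a))
    rwa [h2] at h1

lemma key (w : Fin T → Fin n) :
    ∑ P : Finpartition (Finset.univ : Finset (Fin n)),
        (-1 : ℤ) ^ (P.parts.card + n) * (if Compat w P then 1 else 0)
      = if (∀ i j : Fin n, i < j → ¬ LastFirstAdj w i j) then 1 else 0 := by
  by_cases hD : ∀ i j : Fin n, i < j → ¬ LastFirstAdj w i j
  · rw [if_pos hD, Fintype.sum_eq_single (⊥ : Finpartition (Finset.univ : Finset (Fin n)))]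
    · rw [if_pos compat_bot, mul_one, Finpartition.card_bot, card_univ, Fintype.card_fin,
        pow_add, ← mul_pow]
      norm_num
    · intro P hP
      rw [if_neg (fun hc => hP (eq_bot_of_compat hD hc)), mul_zero]
  · rw [if_neg hD]
    push_neg at hD
    obtain ⟨i₀, j₀, hlt, hadj⟩ := hD
    refine Finset.sum_ninvolution (toggle w i₀ j₀ hlt hadj) ?_ ?_ (fun P => mem_univ _)
      (toggle_toggle hlt hadj)
    · intro P
      by_cases h : Compat w P
      · rw [if_pos h, if_pos (compat_toggle hlt hadj h), mul_one, mul_one]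
        rcases card_toggle hlt hadj h with hcard | hcard
        · rw [show (toggle w i₀ j₀ hlt hadj P).parts.card + n = (P.parts.card + n) + 1 by omega,
            pow_succ]
          ring
        · rw [show P.parts.card + n = ((toggle w i₀ j₀ hlt hadj P).parts.card + n) + 1 by omega,
            pow_succ]
          ring
      · rw [toggle_not_compat hlt hadj h, if_neg h, mul_zero, add_zero]
    · intro P hf
      have h : Compat w P := by
        by_contra h
        exact hf (by rw [if_neg h, mul_zero])
      exact toggle_ne hlt hadj h

end SSCDF


open scoped Classical in
/-- inclusion–exclusion for failure set partitions.  For words with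
`σ_i + 1` symbols of kind `i` (for `i ∈ Fin n`, with its total order), the signed sum
over set partitions `P` of `Fin n` of `(-1)^{|P| + n}` times the number of words in
which, for every block `p = {p_1 < ⋯ < p_k}` of `P`, the last symbol of kind `p_m` is
immediately followed by the first symbol of kind `p_{m+1}` for each `m`, equals the
number of words whose failure set partition is discrete, i.e. in which the last symbol
of a kind `i` is never immediately followed by the first symbol of a kind `j > i`. -/
theorem signed_sum_counts_discrete_failures (n : ℕ) (σ : Fin n → ℕ) :
    (∑ P : Finpartition (Finset.univ : Finset (Fin n)),
        (-1 : ℤ) ^ (P.parts.card + n) *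
          (Finset.univ.filter (fun w : Fin (∑ i, (σ i + 1)) → Fin n =>
            (∀ i : Fin n, (Finset.univ.filter (fun t => w t = i)).card = σ i + 1) ∧
            (∀ p ∈ P.parts, ∀ x ∈ p, ∀ y ∈ p, x < y →
              (∀ z ∈ p, ¬(x < z ∧ z < y)) → LastFirstAdj w x y))).card) =
      ((Finset.univ.filter (fun w : Fin (∑ i, (σ i + 1)) → Fin n =>
          (∀ i : Fin n, (Finset.univ.filter (fun t => w t = i)).card = σ i + 1) ∧
          (∀ i j : Fin n, i < j → ¬ LastFirstAdj w i j))).card : ℤ) := by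
  classical
  have step1 : ∀ (P : Finpartition (Finset.univ : Finset (Fin n))),
      ((Finset.univ.filter (fun w : Fin (∑ i, (σ i + 1)) → Fin n =>
            (∀ i : Fin n, (Finset.univ.filter (fun t => w t = i)).card = σ i + 1) ∧
            (∀ p ∈ P.parts, ∀ x ∈ p, ∀ y ∈ p, x < y →
              (∀ z ∈ p, ¬(x < z ∧ z < y)) → LastFirstAdj w x y))).card : ℤ)
        = ∑ w : Fin (∑ i, (σ i + 1)) → Fin n,
            (if (∀ i : Fin n, (Finset.univ.filter (fun t => w t = i)).card = σ i + 1)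
              then (1 : ℤ) else 0) * (if SSCDF.Compat w P then (1 : ℤ) else 0) := by
    intro P
    rw [Finset.card_filter]
    push_cast
    refine Finset.sum_congr rfl fun w _ => ?_
    by_cases hA : ∀ i : Fin n, (Finset.univ.filter (fun t => w t = i)).card = σ i + 1
    · by_cases hB : SSCDF.Compat w P
      · have hB' : ∀ p ∈ P.parts, ∀ x ∈ p, ∀ y ∈ p, x < y →
            (∀ z ∈ p, ¬(x < z ∧ z < y)) → LastFirstAdj w x y := hB
        rw [if_pos ⟨hA, hB'⟩, if_pos hA, if_pos hB, mul_one]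
      · have hB' : ¬ ((∀ i : Fin n, (Finset.univ.filter (fun t => w t = i)).card = σ i + 1) ∧
            (∀ p ∈ P.parts, ∀ x ∈ p, ∀ y ∈ p, x < y →
              (∀ z ∈ p, ¬(x < z ∧ z < y)) → LastFirstAdj w x y)) := fun hc => hB hc.2
        rw [if_neg hB', if_neg hB, mul_zero]
    · have hB' : ¬ ((∀ i : Fin n, (Finset.univ.filter (fun t => w t = i)).card = σ i + 1) ∧
          (∀ p ∈ P.parts, ∀ x ∈ p, ∀ y ∈ p, x < y →
            (∀ z ∈ p, ¬(x < z ∧ z < y)) → LastFirstAdj w x y)) := fun hc => hA hc.1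
      rw [if_neg hB', if_neg hA, zero_mul]
  calc
    (∑ P : Finpartition (Finset.univ : Finset (Fin n)),
        (-1 : ℤ) ^ (P.parts.card + n) *
          (Finset.univ.filter (fun w : Fin (∑ i, (σ i + 1)) → Fin n =>
            (∀ i : Fin n, (Finset.univ.filter (fun t => w t = i)).card = σ i + 1) ∧
            (∀ p ∈ P.parts, ∀ x ∈ p, ∀ y ∈ p, x < y →
              (∀ z ∈ p, ¬(x < z ∧ z < y)) → LastFirstAdj w x y))).card)
      = ∑ P : Finpartition (Finset.univ : Finset (Fin n)),
          ∑ w : Fin (∑ i, (σ i + 1)) → Fin n,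
            (if (∀ i : Fin n, (Finset.univ.filter (fun t => w t = i)).card = σ i + 1)
              then (1 : ℤ) else 0) *
            ((-1 : ℤ) ^ (P.parts.card + n) * (if SSCDF.Compat w P then (1 : ℤ) else 0)) := by
        refine Finset.sum_congr rfl fun P _ => ?_
        rw [step1 P, Finset.mul_sum]
        refine Finset.sum_congr rfl fun w _ => ?_
        ring
    _ = ∑ w : Fin (∑ i, (σ i + 1)) → Fin n,
          (if (∀ i : Fin n, (Finset.univ.filter (fun t => w t = i)).card = σ i + 1)
            then (1 : ℤ) else 0) *
          ∑ P : Finpartition (Finset.univ : Finset (Fin n)),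
            (-1 : ℤ) ^ (P.parts.card + n) * (if SSCDF.Compat w P then (1 : ℤ) else 0) := by
        rw [Finset.sum_comm]
        exact Finset.sum_congr rfl fun w _ => (Finset.mul_sum _ _ _).symm
    _ = ∑ w : Fin (∑ i, (σ i + 1)) → Fin n,
          (if (∀ i : Fin n, (Finset.univ.filter (fun t => w t = i)).card = σ i + 1)
            then (1 : ℤ) else 0) *
          (if (∀ i j : Fin n, i < j → ¬ LastFirstAdj w i j) then (1 : ℤ) else 0) := by
        refine Finset.sum_congr rfl fun w _ => ?_
        rw [SSCDF.key w]
    _ = ((Finset.univ.filter (fun w : Fin (∑ i, (σ i + 1)) → Fin n =>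
          (∀ i : Fin n, (Finset.univ.filter (fun t => w t = i)).card = σ i + 1) ∧
          (∀ i j : Fin n, i < j → ¬ LastFirstAdj w i j))).card : ℤ) := by
        rw [Finset.card_filter]
        push_cast
        refine Finset.sum_congr rfl fun w _ => ?_
        by_cases hA : ∀ i : Fin n, (Finset.univ.filter (fun t => w t = i)).card = σ i + 1 <;>
          by_cases hB : ∀ i j : Fin n, i < j → ¬ LastFirstAdj w i j <;>
          simp [hA, hB]
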